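/- Let d ≥ 2, θ = (θ_1,…,θ_d), ξ = (ξ_1,…,ξ_d) ∈ ℝᵈ, and let C_{θ,ξ} be the conjugation on ℓ²(ℕᵈ, ℂ) defined coefficientwise by (C_{θ,ξ} a)_k = exp(i Σ_{j=1}^d ξ_j) · exp(−i Σ_{j=1}^d k_j θ_j) · conj(a_k) for k ∈ ℕᵈ. Let T be a Toeplitz operator on ℓ²(ℕᵈ, ℂ) with symbol coefficients φ(k), k ∈ ℤᵈ. Then T is C_{θ,ξ}-symmetric (C_{θ,ξ} T* C_{θ,ξ} = T) if and only if exp(i Σ_{j=1}^d k_j θ_j) · φ(k) = φ(−k) for all k ∈ ℤᵈ. -/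

import Mathlib

noncomputable section
open scoped ComplexConjugate
open ContinuousLinearMap

/-- A conjugation on a complex Hilbert space: an antilinear, involutive, isometric map. -/
def IsConjugation {E : Type*} [NormedAddCommGroup E] [InnerProductSpace ℂ E] (C : E → E) : Prop :=
  (∀ (a : ℂ) (f g : E), C (a • f + g) = conj a • C f + C g) ∧
  (∀ f, C (C f) = f) ∧
  (∀ f, ‖C f‖ = ‖f‖)

/-- The inner product in the paper's convention: linear in the first argument and
conjugate-linear in the second (Mathlib's `inner` with the arguments swapped). -/
def ip {E : Type*} [NormedAddCommGroup E] [InnerProductSpace ℂ E] (x y : E) : ℂ :=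
  inner ℂ y x

/-- `ℓ²(ℕᵈ, ℂ)`, identified with the Hardy space `H²(𝔻ᵈ)`. -/
abbrev Ell2d (d : ℕ) : Type := lp (fun _ : (Fin d → ℕ) => ℂ) 2

/-- The standard orthonormal basis of `ℓ²(ℕᵈ, ℂ)`. -/
def ed {d : ℕ} (k : Fin d → ℕ) : Ell2d d := lp.single 2 k 1

lemma inner_ed_left {d : ℕ} (k : Fin d → ℕ) (f : Ell2d d) : (inner ℂ (ed k) f : ℂ) = f k := by
  rw [ed, lp.inner_single_left]; simp [RCLike.inner_apply]

lemma ed_apply {d : ℕ} (l k : Fin d → ℕ) : (ed l : Ell2d d) k = if k = l then 1 else 0 := by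
  by_cases h : k = l <;> simp [ed, lp.single_apply, h]

lemma single_eq_smul_ed {d : ℕ} (l : Fin d → ℕ) (a : ℂ) :
    lp.single 2 l a = a • (ed l : Ell2d d) := by
  apply lp.ext; funext k
  by_cases h : k = l <;> simp [ed, lp.coeFn_smul, lp.single_apply, h]

/-- Let `d ≥ 2`, `θ, ξ ∈ ℝᵈ`, and let `C_{θ,ξ}` be the conjugation on
`ℓ²(ℕᵈ, ℂ)` given coefficientwise by
`(C a)_k = exp(i Σ_j ξ_j) exp(−i Σ_j k_j θ_j) conj(a_k)`.  A Toeplitz operator `T` with symbol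
coefficients `φ(k)` is `C_{θ,ξ}`-symmetric if and only if
`exp(i Σ_j k_j θ_j) φ(k) = φ(−k)` for all `k ∈ ℤᵈ`. -/
theorem c_theta_xi_symmetric_iff_polydisc
    (d : ℕ) (hd : 2 ≤ d) (θ ξ : Fin d → ℝ)
    (C : Ell2d d → Ell2d d) (hC : IsConjugation C)
    (hCdef : ∀ (a : Ell2d d) (k : Fin d → ℕ),
      C a k = Complex.exp (Complex.I * ∑ j, (ξ j : ℂ)) *
        Complex.exp (-Complex.I * ∑ j, ((k j : ℕ) : ℂ) * (θ j : ℂ)) * conj (a k))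
    (S : Fin d → (Ell2d d →L[ℂ] Ell2d d))
    (hS : ∀ (i : Fin d) (k : Fin d → ℕ), S i (ed k) = ed (k + Pi.single i 1))
    (T : Ell2d d →L[ℂ] Ell2d d)
    (hT : ∀ i, (adjoint (S i)).comp (T.comp (S i)) = T)
    (φ : (Fin d → ℤ) → ℂ)
    (hφ : ∀ k l : Fin d → ℕ, φ (fun j => (k j : ℤ) - (l j : ℤ)) = ip (T (ed l)) (ed k)) :
    (∀ x, C (adjoint T (C x)) = T x) ↔
      ∀ k : Fin d → ℤ,
        Complex.exp (Complex.I * ∑ j, ((k j : ℤ) : ℂ) * (θ j : ℂ)) * φ k = φ (-k) := by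
  obtain ⟨hCa, hCi, hCn⟩ := hC
  -- basic properties of C
  have hC0 : C 0 = 0 := by
    have h := hCa 1 0 0
    simp only [one_smul, add_zero, map_one] at h
    exact (left_eq_add.mp h)
  have hCadd : ∀ f g, C (f + g) = C f + C g := by
    intro f g; have := hCa 1 f g; simpa using this
  have hCsmul : ∀ (a : ℂ) (f : Ell2d d), C (a • f) = conj a • C f := by
    intro a f; have := hCa a f 0; simpa [hC0] using this
  -- entries of T on basis vectors
  have hTent : ∀ k l : Fin d → ℕ, (T (ed l)) k = φ (fun j => (k j : ℤ) - (l j : ℤ)) := by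
    intro k l
    rw [hφ k l, ip, inner_ed_left]
  -- entries of adjoint T on basis vectors
  have hTadj : ∀ k l : Fin d → ℕ,
      (adjoint T (ed l)) k = conj (φ (fun j => (l j : ℤ) - (k j : ℤ))) := by
    intro k l
    rw [← inner_ed_left, ContinuousLinearMap.adjoint_inner_right, ← inner_conj_symm,
      inner_ed_left, hTent]
  -- the scalar coefficients of C on basis vectors
  have hCed : ∀ l : Fin d → ℕ, C (ed l) =
      (Complex.exp (Complex.I * ∑ j, (ξ j : ℂ)) *
        Complex.exp (-Complex.I * ∑ j, ((l j : ℕ) : ℂ) * (θ j : ℂ))) • ed l := by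
    intro l
    apply lp.ext; funext k
    rw [hCdef (ed l) k, lp.coeFn_smul, Pi.smul_apply, ed_apply]
    by_cases h : k = l
    · subst h; simp
    · simp [h]
  -- conjugation facts about the coefficients
  have hconjΞ : conj (Complex.exp (Complex.I * ∑ j, (ξ j : ℂ)))
      = Complex.exp (-(Complex.I * ∑ j, (ξ j : ℂ))) := by
    rw [← Complex.exp_conj]
    congr 1
    simp [map_sum]
  have hconjc : ∀ l : Fin d → ℕ,
      conj (Complex.exp (-Complex.I * ∑ j, ((l j : ℕ) : ℂ) * (θ j : ℂ)))
        = Complex.exp (Complex.I * ∑ j, ((l j : ℕ) : ℂ) * (θ j : ℂ)) := by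
    intro l
    rw [← Complex.exp_conj]
    congr 1
    simp [map_sum]
  -- key entry computation for C T* C on basis vectors
  have key : ∀ l k : Fin d → ℕ,
      (C (adjoint T (C (ed l)))) k
        = Complex.exp (Complex.I * ∑ j, (((l j : ℤ) - (k j : ℤ) : ℤ) : ℂ) * (θ j : ℂ)) *
            φ (fun j => (l j : ℤ) - (k j : ℤ)) := by
    intro l k
    rw [hCed l, map_smul, hCdef]
    rw [lp.coeFn_smul, Pi.smul_apply, smul_eq_mul, map_mul, hTadj k l, map_mul, hconjΞ, hconjc]
    rw [RingHomCompTriple.comp_apply, RingHom.id_apply]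
    have hsum : (∑ j, (((l j : ℤ) - (k j : ℤ) : ℤ) : ℂ) * (θ j : ℂ))
        = (∑ j, ((l j : ℕ) : ℂ) * (θ j : ℂ)) - ∑ j, ((k j : ℕ) : ℂ) * (θ j : ℂ) := by
      rw [← Finset.sum_sub_distrib]
      apply Finset.sum_congr rfl
      intro j _
      push_cast
      ring
    rw [hsum]
    simp only [← Complex.exp_add]
    rw [← mul_assoc, ← Complex.exp_add]
    congr 2
    ring
  -- the basis-level identity equivalent to C-symmetry
  constructor
  · -- forward direction
    intro h m
    have hbasis : ∀ k l : Fin d → ℕ,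
        Complex.exp (Complex.I * ∑ j, (((l j : ℤ) - (k j : ℤ) : ℤ) : ℂ) * (θ j : ℂ)) *
            φ (fun j => (l j : ℤ) - (k j : ℤ))
          = φ (fun j => (k j : ℤ) - (l j : ℤ)) := by
      intro k l
      have := congrArg (fun f : Ell2d d => f k) (h (ed l))
      simpa [key l k, hTent k l] using this
    set l : Fin d → ℕ := fun j => (m j).toNat with hl
    set k : Fin d → ℕ := fun j => (-(m j)).toNat with hk
    have hm : (fun j => ((l j : ℤ) - (k j : ℤ))) = m := by
      funext j
      simp only [hl, hk]
      omega
    have hmn : (fun j => ((k j : ℤ) - (l j : ℤ))) = -m := by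
      funext j
      simp only [hl, hk, Pi.neg_apply]
      omega
    have := hbasis k l
    rw [hm, hmn] at this
    convert this using 3
    rw [← hm]
  · -- backward direction
    intro h x
    -- first, on the basis vectors
    have hbasis : ∀ l : Fin d → ℕ, C (adjoint T (C (ed l))) = T (ed l) := by
      intro l
      apply lp.ext; funext k
      rw [key l k, hTent k l]
      have hneg : -(fun j => ((l j : ℤ) - (k j : ℤ))) = fun j => ((k j : ℤ) - (l j : ℤ)) := by
        funext j; simp
      have := h (fun j => ((l j : ℤ) - (k j : ℤ)))
      rw [hneg] at this
      exact this
    -- then on scalar multiples of basis vectors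
    have hsingle : ∀ (l : Fin d → ℕ) (a : ℂ),
        C (adjoint T (C (lp.single 2 l a))) = T (lp.single 2 l a) := by
      intro l a
      rw [single_eq_smul_ed, hCsmul, map_smul, hCsmul, map_smul, hbasis l]
      simp
    -- C is continuous since it is an isometric additive map
    have hCm : Isometry C := by
      apply AddMonoidHomClass.isometry_of_norm (AddMonoidHom.mk' C hCadd)
      exact hCn
    have hCcont : Continuous C := hCm.continuous
    -- extend by continuity using the HasSum decomposition
    have hs : HasSum (fun l => lp.single 2 l (x l)) x := lp.hasSum_single ENNReal.ofNat_ne_top x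
    have h1 : HasSum (fun l => C (lp.single 2 l (x l))) (C x) :=
      hs.map (AddMonoidHom.mk' C hCadd) hCcont
    have h2 : HasSum (fun l => adjoint T (C (lp.single 2 l (x l)))) (adjoint T (C x)) :=
      h1.mapL (adjoint T)
    have h3 : HasSum (fun l => C (adjoint T (C (lp.single 2 l (x l)))))
        (C (adjoint T (C x))) := h2.map (AddMonoidHom.mk' C hCadd) hCcont
    have h4 : HasSum (fun l => T (lp.single 2 l (x l))) (T x) := hs.mapL T
    simp only [hsingle] at h3
    exact h3.unique h4
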